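/- Define vector fields on ℝ² (with coordinates (φ, θ)) by V₁(φ, θ) = (1, 0), V₂(φ, θ) = (tanh θ · cos φ, sin φ), V₃(φ, θ) = (−tanh θ · sin φ, cos φ), and define the Lie bracket of two smooth vector fields V, W : ℝ² → ℝ² by [V, W](x) = (fderiv ℝ W x)(V x) − (fderiv ℝ V x)(W x). Then [V₁, V₂] = V₃, [V₂, V₃] = −V₁, and [V₃, V₁] = V₂ (so the Lie algebra spanned by V₁, V₂, V₃ is isomorphic to sl(2)). -/

import Mathlib

open Real

/-- Lie bracket of vector fields on `ℝ²`. -/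
noncomputable def lieBracketVF (V W : ℝ × ℝ → ℝ × ℝ) : ℝ × ℝ → ℝ × ℝ :=
  fun x => fderiv ℝ W x (V x) - fderiv ℝ V x (W x)

lemma tanh_hasDerivAt (x : ℝ) : HasDerivAt Real.tanh ((Real.cosh x ^ 2)⁻¹) x := by
  have h := (Real.hasDerivAt_sinh x).div (Real.hasDerivAt_cosh x) (Real.cosh_pos x).ne'
  have e : Real.tanh = fun y => Real.sinh y / Real.cosh y :=
    funext fun y => Real.tanh_eq_sinh_div_cosh y
  rw [e]
  refine h.congr_deriv ?_
  have := Real.cosh_sq_sub_sinh_sq x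
  rw [show Real.cosh x * Real.cosh x - Real.sinh x * Real.sinh x = 1 by nlinarith [this], one_div]

noncomputable def D2 (p : ℝ × ℝ) : ℝ × ℝ →L[ℝ] ℝ × ℝ :=
  (((-(Real.tanh p.2 * Real.sin p.1)) • ContinuousLinearMap.fst ℝ ℝ ℝ +
    ((Real.cosh p.2 ^ 2)⁻¹ * Real.cos p.1) • ContinuousLinearMap.snd ℝ ℝ ℝ).prod
   ((Real.cos p.1) • ContinuousLinearMap.fst ℝ ℝ ℝ))

noncomputable def D3 (p : ℝ × ℝ) : ℝ × ℝ →L[ℝ] ℝ × ℝ :=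
  (((-(Real.tanh p.2 * Real.cos p.1)) • ContinuousLinearMap.fst ℝ ℝ ℝ +
    (-((Real.cosh p.2 ^ 2)⁻¹ * Real.sin p.1)) • ContinuousLinearMap.snd ℝ ℝ ℝ).prod
   ((-Real.sin p.1) • ContinuousLinearMap.fst ℝ ℝ ℝ))

lemma hasD2 (p : ℝ × ℝ) :
    HasFDerivAt (fun q : ℝ × ℝ => (Real.tanh q.2 * Real.cos q.1, Real.sin q.1)) (D2 p) p := by
  have ht := ((tanh_hasDerivAt p.2).hasFDerivAt).comp p (hasFDerivAt_snd (p := p))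
  have hc := ((Real.hasDerivAt_cos p.1).hasFDerivAt).comp p (hasFDerivAt_fst (p := p))
  have hs := ((Real.hasDerivAt_sin p.1).hasFDerivAt).comp p (hasFDerivAt_fst (p := p))
  have h := HasFDerivAt.prodMk (ht.mul hc) hs
  refine h.congr_fderiv ?_
  apply ContinuousLinearMap.ext; intro v
  apply Prod.ext <;>
    simp [D2, ContinuousLinearMap.smulRight_apply] <;> ring

lemma hasD3 (p : ℝ × ℝ) :
    HasFDerivAt (fun q : ℝ × ℝ => (-(Real.tanh q.2 * Real.sin q.1), Real.cos q.1)) (D3 p) p := by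
  have ht := ((tanh_hasDerivAt p.2).hasFDerivAt).comp p (hasFDerivAt_snd (p := p))
  have hc := ((Real.hasDerivAt_cos p.1).hasFDerivAt).comp p (hasFDerivAt_fst (p := p))
  have hs := ((Real.hasDerivAt_sin p.1).hasFDerivAt).comp p (hasFDerivAt_fst (p := p))
  have h := HasFDerivAt.prodMk ((ht.mul hs).neg) hc
  refine h.congr_fderiv ?_
  apply ContinuousLinearMap.ext; intro v
  apply Prod.ext <;>
    simp [D3, ContinuousLinearMap.smulRight_apply] <;> ring

lemma tanh_sq_add (x : ℝ) : Real.tanh x ^ 2 + (Real.cosh x ^ 2)⁻¹ = 1 := by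
  have h := Real.cosh_sq_sub_sinh_sq x
  have hc := (Real.cosh_pos x).ne'
  rw [Real.tanh_eq_sinh_div_cosh]
  field_simp
  nlinarith [h]

/-- The Killing vector fields of the anti-de Sitter plane, in coordinates `(φ, θ)`,
satisfy `[V₁, V₂] = V₃`, `[V₂, V₃] = -V₁`, `[V₃, V₁] = V₂`. -/
theorem stmt_14 (V₁ V₂ V₃ : ℝ × ℝ → ℝ × ℝ)
    (hV₁ : ∀ p : ℝ × ℝ, V₁ p = (1, 0))
    (hV₂ : ∀ p : ℝ × ℝ, V₂ p = (tanh p.2 * cos p.1, sin p.1))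
    (hV₃ : ∀ p : ℝ × ℝ, V₃ p = (-(tanh p.2 * sin p.1), cos p.1)) :
    lieBracketVF V₁ V₂ = V₃ ∧
    lieBracketVF V₂ V₃ = (fun p => -V₁ p) ∧
    lieBracketVF V₃ V₁ = V₂ := by
  obtain rfl := funext hV₁
  obtain rfl := funext hV₂
  obtain rfl := funext hV₃
  refine ⟨funext fun p => ?_, funext fun p => ?_, funext fun p => ?_⟩
  · simp only [lieBracketVF, (hasD2 p).fderiv, fderiv_const]
    simp [D2, Prod.ext_iff]
  · simp only [lieBracketVF, (hasD2 p).fderiv, (hasD3 p).fderiv]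
    have h := tanh_sq_add p.2
    have hs := Real.sin_sq_add_cos_sq p.1
    simp [D2, D3, Prod.ext_iff]
    constructor <;> nlinarith [h, hs]
  · simp only [lieBracketVF, (hasD3 p).fderiv, fderiv_const]
    simp [D3, Prod.ext_iff]
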